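/- Let X be a random variable on a probability space (Ω, F, P) with Var(X) ≥ c₁ > 0 and E[X⁴] ≤ c₂ < ∞. Then there exists a constant c₃ > 0 depending only on c₁ and c₂, and measurable sets Ω₁, Ω₂ ⊆ Ω with P(Ω₁) ≥ c₃ and P(Ω₂) ≥ c₃, such that |X(ω₁) − X(ω₂)| ≥ √c₁/2 for every ω₁ ∈ Ω₁ and ω₂ ∈ Ω₂. -/

import Mathlib

open MeasureTheory ProbabilityTheory

lemma cs_set_aux {Ω : Type} [MeasurableSpace Ω] (P : Measure Ω) [IsProbabilityMeasure P]
    {f : Ω → ℝ} (hfm : Measurable f) (hfnn : ∀ ω, 0 ≤ f ω)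
    (hf2 : Integrable (fun ω => f ω ^ 2) P)
    {B : Set Ω} (hB : MeasurableSet B) :
    ∫ ω in B, f ω ∂P ≤ Real.sqrt (∫ ω, f ω ^ 2 ∂P) * Real.sqrt ((P B).toReal) := by
  set g : Ω → ℝ := B.indicator (fun _ => (1:ℝ)) with hg
  have hconj : Real.HolderConjugate 2 2 := Real.HolderConjugate.two_two
  have hfmem : MemLp f (ENNReal.ofReal 2) P := by
    rw [show ENNReal.ofReal 2 = 2 by simp]
    exact (memLp_two_iff_integrable_sq hfm.aestronglyMeasurable).2 hf2
  have hgmem : MemLp g (ENNReal.ofReal 2) P := by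
    rw [show ENNReal.ofReal 2 = 2 by simp]
    exact (memLp_const (1:ℝ)).indicator hB
  have hmul := integral_mul_le_Lp_mul_Lq_of_nonneg hconj (ae_of_all _ hfnn)
    (ae_of_all _ fun ω => Set.indicator_nonneg (fun _ _ => zero_le_one) ω) hfmem hgmem
  have h1 : (fun ω => f ω * g ω) = B.indicator f := by
    funext ω
    by_cases h : ω ∈ B <;> simp [hg, Set.indicator, h]
  have h2 : ∫ ω, f ω * g ω ∂P = ∫ ω in B, f ω ∂P := by
    rw [h1, integral_indicator hB]
  have h3 : ∫ ω, f ω ^ (2:ℝ) ∂P = ∫ ω, f ω ^ 2 ∂P := by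
    simp_rw [Real.rpow_two]
  have h4 : ∫ ω, g ω ^ (2:ℝ) ∂P = (P B).toReal := by
    have : (fun ω => g ω ^ (2:ℝ)) = B.indicator (fun _ => (1:ℝ)) := by
      funext ω
      by_cases h : ω ∈ B <;> simp [hg, Set.indicator, h]
    rw [this, integral_indicator hB]
    simp; rfl
  rw [h2, h3, h4] at hmul
  calc ∫ ω in B, f ω ∂P ≤ (∫ ω, f ω ^ 2 ∂P) ^ (1/(2:ℝ)) * ((P B).toReal) ^ (1/(2:ℝ)) := hmul
    _ = _ := by rw [← Real.sqrt_eq_rpow, ← Real.sqrt_eq_rpow]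

lemma tail_aux {Ω : Type} [MeasurableSpace Ω] (P : Measure Ω) [IsProbabilityMeasure P]
    {Y : Ω → ℝ} (hYm : Measurable Y) (hYi : Integrable Y P)
    (hY2 : Integrable (fun ω => Y ω ^ 2) P)
    (hY0 : ∫ ω, Y ω ∂P = 0) {s q : ℝ} (hs : 0 < s)
    (hA : q ≤ s * (P {ω | s ≤ Y ω}).toReal) :
    q ≤ Real.sqrt (∫ ω, Y ω ^ 2 ∂P) * Real.sqrt ((P {ω | Y ω ≤ 0}).toReal) := by
  set A : Set Ω := {ω | s ≤ Y ω} with hAdef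
  set B : Set Ω := {ω | Y ω ≤ 0} with hBdef
  have hmA : MeasurableSet A := measurableSet_le measurable_const hYm
  have hmB : MeasurableSet B := measurableSet_le hYm measurable_const
  have h1 : s * (P A).toReal ≤ ∫ ω in A, Y ω ∂P :=
    setIntegral_ge_of_const_le_real hmA (measure_ne_top P A) (fun ω hω => hω) hYi.integrableOn
  have hsub : A ⊆ Bᶜ := fun ω hω => by
    simp only [hBdef, Set.mem_compl_iff, Set.mem_setOf_eq, not_le]
    exact lt_of_lt_of_le hs hω
  have h2 : ∫ ω in A, Y ω ∂P ≤ ∫ ω in Bᶜ, Y ω ∂P := by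
    refine setIntegral_mono_set hYi.integrableOn ?_ (HasSubset.Subset.eventuallyLE hsub)
    refine (ae_restrict_mem hmB.compl).mono fun ω hω => ?_
    simp only [hBdef, Set.mem_compl_iff, Set.mem_setOf_eq, not_le] at hω
    exact hω.le
  have h3 : ∫ ω in Bᶜ, Y ω ∂P = - ∫ ω in B, Y ω ∂P := by
    have := integral_add_compl hmB hYi
    rw [hY0] at this
    linarith
  set g : Ω → ℝ := fun ω => if Y ω ≤ 0 then -Y ω else 0 with hgdef
  have hgm : Measurable g := Measurable.ite hmB hYm.neg measurable_const
  have hgnn : ∀ ω, 0 ≤ g ω := fun ω => by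
    simp only [hgdef]; split_ifs with h
    · linarith
    · exact le_rfl
  have hgsq : ∀ ω, g ω ^ 2 ≤ Y ω ^ 2 := fun ω => by
    simp only [hgdef]; split_ifs with h
    · rw [neg_sq]
    · simpa using sq_nonneg (Y ω)
  have hg2 : Integrable (fun ω => g ω ^ 2) P := by
    refine hY2.mono' (hgm.pow_const 2).aestronglyMeasurable (ae_of_all _ fun ω => ?_)
    rw [Real.norm_eq_abs, abs_of_nonneg (sq_nonneg _)]
    exact hgsq ω
  have h4 : - ∫ ω in B, Y ω ∂P = ∫ ω in B, g ω ∂P := by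
    rw [← integral_neg]
    refine setIntegral_congr_fun hmB fun ω hω => ?_
    have hω' : Y ω ≤ 0 := hω
    simp only [hgdef, if_pos hω']
  have h5 := cs_set_aux P hgm hgnn hg2 hmB
  have h6 : Real.sqrt (∫ ω, g ω ^ 2 ∂P) ≤ Real.sqrt (∫ ω, Y ω ^ 2 ∂P) :=
    Real.sqrt_le_sqrt (integral_mono hg2 hY2 hgsq)
  have hfin : ∫ ω in B, g ω ∂P ≤ Real.sqrt (∫ ω, Y ω ^ 2 ∂P) * Real.sqrt ((P B).toReal) :=
    le_trans h5 (mul_le_mul_of_nonneg_right h6 (Real.sqrt_nonneg _))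
  linarith

set_option maxHeartbeats 1000000 in
theorem anticoncentration_of_variance (c₁ c₂ : ℝ) (hc₁ : 0 < c₁) :
    ∃ c₃ : ℝ, 0 < c₃ ∧
      ∀ (Ω : Type) [MeasurableSpace Ω] (P : Measure Ω) [IsProbabilityMeasure P]
        (X : Ω → ℝ),
        Measurable X →
        Integrable X P → Integrable (fun ω => X ω ^ 2) P →
        Integrable (fun ω => X ω ^ 4) P →
        c₁ ≤ variance X P → (∫ ω, X ω ^ 4 ∂P) ≤ c₂ →
        ∃ Ω₁ Ω₂ : Set Ω, MeasurableSet Ω₁ ∧ MeasurableSet Ω₂ ∧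
          ENNReal.ofReal c₃ ≤ P Ω₁ ∧ ENNReal.ofReal c₃ ≤ P Ω₂ ∧
          ∀ ω₁ ∈ Ω₁, ∀ ω₂ ∈ Ω₂, Real.sqrt c₁ / 2 ≤ |X ω₁ - X ω₂| := by
  have hd : (0:ℝ) < max c₂ (c₁ ^ 2) := lt_max_of_lt_right (by positivity)
  set d := max c₂ (c₁ ^ 2) with hd_def
  set p := 9 * c₁ ^ 2 / (256 * d) with hp_def
  have hsd : 0 < Real.sqrt d := Real.sqrt_pos.2 hd
  have hp : 0 < p := div_pos (by positivity) (by linarith)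
  set r := c₁ * p ^ 2 / (16 * Real.sqrt d) with hr_def
  have hr : 0 < r := div_pos (by positivity) (by linarith)
  refine ⟨min (p / 2) r, lt_min (by linarith) hr, ?_⟩
  intro Ω _ P _ X hXm hXi hX2 hX4 hvar hc₂
  set s := Real.sqrt c₁ / 2 with hs_def
  have hs : 0 < s := div_pos (Real.sqrt_pos.2 hc₁) two_pos
  have hs2 : s ^ 2 = c₁ / 4 := by
    rw [hs_def, div_pow, Real.sq_sqrt hc₁.le]; norm_num
  set m := ∫ ω, X ω ∂P with hm_def
  have hX4d : ∫ ω, X ω ^ 4 ∂P ≤ d := le_trans hc₂ (le_max_left _ _)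
  have hX4nn : 0 ≤ ∫ ω, X ω ^ 4 ∂P := integral_nonneg fun ω => by positivity
  have hX2nn : 0 ≤ ∫ ω, X ω ^ 2 ∂P := integral_nonneg fun ω => sq_nonneg _
  -- E[X^2] ≤ √d
  have hX4' : Integrable (fun ω => (X ω ^ 2) ^ 2) P := by
    have e : (fun ω => (X ω ^ 2) ^ 2) = fun ω => X ω ^ 4 := by funext ω; ring
    rw [e]; exact hX4
  have hEX2 : ∫ ω, X ω ^ 2 ∂P ≤ Real.sqrt d := by
    have h := cs_set_aux P (hXm.pow_const 2) (fun ω => sq_nonneg _) hX4' MeasurableSet.univ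
    simp only [Measure.restrict_univ, measure_univ, ENNReal.toReal_one, Real.sqrt_one,
      mul_one] at h
    have e : ∫ ω, (X ω ^ 2) ^ 2 ∂P = ∫ ω, X ω ^ 4 ∂P := by
      refine integral_congr_ae (ae_of_all _ fun ω => by ring)
    rw [e] at h
    exact le_trans h (Real.sqrt_le_sqrt hX4d)
  -- moments of Y = X - m
  have hmem2 : MemLp X 2 P := (memLp_two_iff_integrable_sq hXm.aestronglyMeasurable).2 hX2
  have hm2 : m ^ 2 ≤ ∫ ω, X ω ^ 2 ∂P := by
    have h := variance_eq_sub hmem2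
    have h2 := variance_nonneg X P
    simp only [Pi.pow_apply] at h
    rw [h] at h2
    rw [hm_def]
    linarith
  have hm4 : m ^ 4 ≤ d := by
    have hm2d : m ^ 2 ≤ Real.sqrt d := le_trans hm2 hEX2
    nlinarith [Real.sq_sqrt hd.le, sq_nonneg m]
  have hYm : Measurable (fun ω => X ω - m) := hXm.sub measurable_const
  have hYi : Integrable (fun ω => X ω - m) P := hXi.sub (integrable_const m)
  have hY0 : ∫ ω, (X ω - m) ∂P = 0 := by
    rw [integral_sub hXi (integrable_const m), integral_const]
    simp [hm_def]
  have hY2 : Integrable (fun ω => (X ω - m) ^ 2) P := by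
    have e : (fun ω => (X ω - m) ^ 2) = fun ω => X ω ^ 2 - 2 * m * X ω + m ^ 2 := by
      funext ω; ring
    rw [e]
    exact (hX2.sub (hXi.const_mul (2 * m))).add (integrable_const _)
  have hX3 : Integrable (fun ω => X ω ^ 3) P := by
    refine (hX4.add (integrable_const 1)).mono'
      ((hXm.pow_const 3).aestronglyMeasurable) (ae_of_all _ fun ω => ?_)
    simp only [Pi.add_apply]
    rw [Real.norm_eq_abs, abs_pow]
    have habs4 : |X ω| ^ 4 = X ω ^ 4 := by
      rw [pow_abs, abs_of_nonneg (by positivity)]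
    nlinarith [abs_nonneg (X ω), sq_nonneg (|X ω| ^ 2 - |X ω|), sq_nonneg (|X ω| - 1),
      sq_nonneg (|X ω| + 1), sq_nonneg (|X ω| ^ 2 - 1)]
  have hY4 : Integrable (fun ω => (X ω - m) ^ 4) P := by
    have e : (fun ω => (X ω - m) ^ 4) =
        fun ω => X ω ^ 4 - 4 * m * X ω ^ 3 + 6 * m ^ 2 * X ω ^ 2 - 4 * m ^ 3 * X ω + m ^ 4 := by
      funext ω; ring
    rw [e]
    exact (((hX4.sub (hX3.const_mul (4 * m))).add (hX2.const_mul (6 * m ^ 2))).sub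
      (hXi.const_mul (4 * m ^ 3))).add (integrable_const _)
  have hY4le : ∫ ω, (X ω - m) ^ 4 ∂P ≤ 16 * d := by
    have hpt : ∀ ω, (X ω - m) ^ 4 ≤ 8 * (X ω ^ 4 + m ^ 4) := fun ω => by
      nlinarith [sq_nonneg (X ω + m), sq_nonneg (X ω - m), sq_nonneg (X ω ^ 2 - m ^ 2),
        sq_nonneg (X ω ^ 2 + m ^ 2), sq_nonneg ((X ω - m) ^ 2)]
    have h := integral_mono hY4 ((hX4.add (integrable_const (m ^ 4))).const_mul 8) hpt
    simp only [Pi.add_apply] at h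
    rw [integral_const_mul, integral_add hX4 (integrable_const _), integral_const] at h
    simp only [probReal_univ, measure_univ, ENNReal.toReal_one, smul_eq_mul, one_mul] at h
    linarith
  -- variance identity
  have hVarEq : variance X P = ∫ ω, (X ω - m) ^ 2 ∂P := by
    have h := variance_eq_integral (μ := P) hXm.aemeasurable
    rw [← hm_def] at h
    exact h
  have hVarY : c₁ ≤ ∫ ω, (X ω - m) ^ 2 ∂P := by rw [← hVarEq]; exact hvar
  have hV2 : ∫ ω, (X ω - m) ^ 2 ∂P ≤ Real.sqrt d := by
    rw [← hVarEq]
    have h := variance_le_expectation_sq (μ := P) (X := X) hXm.aestronglyMeasurable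
    simp only [Pi.pow_apply] at h
    exact le_trans h hEX2
  -- Paley–Zygmund type bound: P(|Y| ≥ s) ≥ p
  set A : Set Ω := {ω | s ≤ |X ω - m|} with hA_def
  have hmA : MeasurableSet A := measurableSet_le measurable_const (hYm.abs)
  have hsplit := integral_add_compl hmA hY2
  have hcompl : ∫ ω in Aᶜ, (X ω - m) ^ 2 ∂P ≤ c₁ / 4 := by
    have hae : ∀ᵐ ω ∂P, ω ∈ Aᶜ → ‖(X ω - m) ^ 2‖ ≤ c₁ / 4 := by
      refine ae_of_all _ fun ω hω => ?_
      simp only [hA_def, Set.mem_compl_iff, Set.mem_setOf_eq, not_le] at hω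
      rw [Real.norm_eq_abs, abs_of_nonneg (sq_nonneg _)]
      calc (X ω - m) ^ 2 = |X ω - m| ^ 2 := (sq_abs _).symm
        _ ≤ s ^ 2 := by nlinarith [abs_nonneg (X ω - m)]
        _ = c₁ / 4 := hs2
    have h := norm_setIntegral_le_of_norm_le_const_ae' (measure_lt_top P Aᶜ) hae
    have h1c : (P Aᶜ).toReal ≤ 1 := by
      have := ENNReal.toReal_mono (by simp) (prob_le_one (μ := P) (s := Aᶜ))
      simpa using this
    calc ∫ ω in Aᶜ, (X ω - m) ^ 2 ∂P ≤ ‖∫ ω in Aᶜ, (X ω - m) ^ 2 ∂P‖ := le_abs_self _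
      _ ≤ c₁ / 4 * (P Aᶜ).toReal := h
      _ ≤ c₁ / 4 * 1 := by
          exact mul_le_mul_of_nonneg_left h1c (by linarith)
      _ = c₁ / 4 := mul_one _
  have hY4sq : Integrable (fun ω => ((X ω - m) ^ 2) ^ 2) P := by
    have e : (fun ω => ((X ω - m) ^ 2) ^ 2) = fun ω => (X ω - m) ^ 4 := by funext ω; ring
    rw [e]; exact hY4
  have hAint : ∫ ω in A, (X ω - m) ^ 2 ∂P ≤
      Real.sqrt (∫ ω, (X ω - m) ^ 4 ∂P) * Real.sqrt ((P A).toReal) := by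
    have h := cs_set_aux P (hYm.pow_const 2) (fun ω => sq_nonneg _) hY4sq hmA
    have e : ∫ ω, ((X ω - m) ^ 2) ^ 2 ∂P = ∫ ω, (X ω - m) ^ 4 ∂P :=
      integral_congr_ae (ae_of_all _ fun ω => by ring)
    rwa [e] at h
  have h7 : 3 * c₁ / 4 ≤ Real.sqrt (∫ ω, (X ω - m) ^ 4 ∂P) * Real.sqrt ((P A).toReal) := by
    linarith
  have h8 : Real.sqrt (∫ ω, (X ω - m) ^ 4 ∂P) ≤ 4 * Real.sqrt d := by
    have := Real.sqrt_le_sqrt hY4le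
    rwa [show (16:ℝ) * d = 4 ^ 2 * d by norm_num, Real.sqrt_mul (by positivity) d,
      Real.sqrt_sq (by norm_num : (0:ℝ) ≤ 4)] at this
  have h9 : 3 * c₁ / 4 ≤ 4 * Real.sqrt d * Real.sqrt ((P A).toReal) :=
    le_trans h7 (mul_le_mul_of_nonneg_right h8 (Real.sqrt_nonneg _))
  have hPA : p ≤ (P A).toReal := by
    have h10 := pow_le_pow_left₀ (by positivity) h9 2
    have e1 : Real.sqrt d ^ 2 = d := Real.sq_sqrt hd.le
    have e2 : Real.sqrt ((P A).toReal) ^ 2 = (P A).toReal :=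
      Real.sq_sqrt ENNReal.toReal_nonneg
    have e3 : (4 * Real.sqrt d * Real.sqrt ((P A).toReal)) ^ 2 = 16 * d * (P A).toReal := by
      rw [mul_pow, mul_pow, e1, e2]; ring
    rw [e3] at h10
    rw [hp_def, div_le_iff₀ (by linarith : (0:ℝ) < 256 * d)]
    nlinarith
  -- split A into positive and negative parts
  set Ap : Set Ω := {ω | s ≤ X ω - m} with hAp_def
  set An : Set Ω := {ω | s ≤ -(X ω - m)} with hAn_def
  have hmAp : MeasurableSet Ap := measurableSet_le measurable_const hYm
  have hmAn : MeasurableSet An := measurableSet_le measurable_const hYm.neg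
  have hsubA : A ⊆ Ap ∪ An := fun ω hω => by
    have hω' : s ≤ |X ω - m| := hω
    rcases le_abs.1 hω' with h | h
    · exact Or.inl h
    · exact Or.inr h
  have hPsplit : (P A).toReal ≤ (P Ap).toReal + (P An).toReal := by
    have h := (measure_mono hsubA).trans (measure_union_le (μ := P) Ap An)
    have h' := ENNReal.toReal_mono
      (ENNReal.add_ne_top.2 ⟨measure_ne_top _ _, measure_ne_top _ _⟩) h
    rwa [ENNReal.toReal_add (measure_ne_top _ _) (measure_ne_top _ _)] at h'
  have hnegsq : (fun ω => (-(X ω - m)) ^ 2) = (fun ω => (X ω - m) ^ 2) := by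
    funext ω; ring
  rcases le_or_gt (p / 2) ((P Ap).toReal) with hcase | hcase
  · -- positive case
    have htail := tail_aux P hYm hYi hY2 hY0 hs
      (le_refl (s * (P Ap).toReal))
    set B : Set Ω := {ω | X ω - m ≤ 0} with hB_def
    have hmB : MeasurableSet B := measurableSet_le hYm measurable_const
    have h11 : s * (p / 2) ≤ Real.sqrt (Real.sqrt d) * Real.sqrt ((P B).toReal) := by
      have step : s * (p / 2) ≤ s * (P Ap).toReal :=
        mul_le_mul_of_nonneg_left hcase hs.le
      refine le_trans (le_trans step htail) ?_
      exact mul_le_mul_of_nonneg_right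
        (Real.sqrt_le_sqrt hV2) (Real.sqrt_nonneg _)
    have hPB : r ≤ (P B).toReal := by
      have h12 := pow_le_pow_left₀ (by positivity) h11 2
      have e1 : Real.sqrt (Real.sqrt d) ^ 2 = Real.sqrt d :=
        Real.sq_sqrt (Real.sqrt_nonneg d)
      have e2 : Real.sqrt ((P B).toReal) ^ 2 = (P B).toReal :=
        Real.sq_sqrt ENNReal.toReal_nonneg
      have e4 : (Real.sqrt (Real.sqrt d) * Real.sqrt ((P B).toReal)) ^ 2
          = Real.sqrt d * (P B).toReal := by rw [mul_pow, e1, e2]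
      have e5 : (s * (p / 2)) ^ 2 = c₁ * p ^ 2 / 16 := by
        rw [mul_pow, hs2]; ring
      rw [e4, e5] at h12
      rw [hr_def, div_le_iff₀ (by linarith : (0:ℝ) < 16 * Real.sqrt d)]
      linarith
    refine ⟨Ap, B, hmAp, hmB, ?_, ?_, ?_⟩
    · calc ENNReal.ofReal (min (p / 2) r) ≤ ENNReal.ofReal ((P Ap).toReal) :=
          ENNReal.ofReal_le_ofReal (le_trans (min_le_left _ _) hcase)
        _ = P Ap := ENNReal.ofReal_toReal (measure_ne_top _ _)
    · calc ENNReal.ofReal (min (p / 2) r) ≤ ENNReal.ofReal ((P B).toReal) :=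
          ENNReal.ofReal_le_ofReal (le_trans (min_le_right _ _) hPB)
        _ = P B := ENNReal.ofReal_toReal (measure_ne_top _ _)
    · intro ω₁ hω₁ ω₂ hω₂
      simp only [hAp_def, Set.mem_setOf_eq] at hω₁
      simp only [hB_def, Set.mem_setOf_eq] at hω₂
      have : s ≤ X ω₁ - X ω₂ := by linarith
      calc Real.sqrt c₁ / 2 = s := hs_def.symm
        _ ≤ X ω₁ - X ω₂ := this
        _ ≤ |X ω₁ - X ω₂| := le_abs_self _
  · -- negative case
    have hcase' : p / 2 ≤ (P An).toReal := by linarith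
    have hY2' : Integrable (fun ω => (-(X ω - m)) ^ 2) P := by rw [hnegsq]; exact hY2
    have hY0' : ∫ ω, -(X ω - m) ∂P = 0 := by rw [integral_neg, hY0, neg_zero]
    have htail := tail_aux P hYm.neg hYi.neg hY2' hY0' hs
      (le_refl (s * (P An).toReal))
    simp only [Pi.neg_apply, neg_sq] at htail
    set B : Set Ω := {ω | -(X ω - m) ≤ 0} with hB_def
    have hmB : MeasurableSet B := measurableSet_le hYm.neg measurable_const
    have h11 : s * (p / 2) ≤ Real.sqrt (Real.sqrt d) * Real.sqrt ((P B).toReal) := by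
      have step : s * (p / 2) ≤ s * (P An).toReal :=
        mul_le_mul_of_nonneg_left hcase' hs.le
      refine le_trans (le_trans step htail) ?_
      exact mul_le_mul_of_nonneg_right (Real.sqrt_le_sqrt hV2) (Real.sqrt_nonneg _)
    have hPB : r ≤ (P B).toReal := by
      have h12 := pow_le_pow_left₀ (by positivity) h11 2
      have e1 : Real.sqrt (Real.sqrt d) ^ 2 = Real.sqrt d :=
        Real.sq_sqrt (Real.sqrt_nonneg d)
      have e2 : Real.sqrt ((P B).toReal) ^ 2 = (P B).toReal :=
        Real.sq_sqrt ENNReal.toReal_nonneg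
      have e4 : (Real.sqrt (Real.sqrt d) * Real.sqrt ((P B).toReal)) ^ 2
          = Real.sqrt d * (P B).toReal := by rw [mul_pow, e1, e2]
      have e5 : (s * (p / 2)) ^ 2 = c₁ * p ^ 2 / 16 := by
        rw [mul_pow, hs2]; ring
      rw [e4, e5] at h12
      rw [hr_def, div_le_iff₀ (by linarith : (0:ℝ) < 16 * Real.sqrt d)]
      linarith
    refine ⟨An, B, hmAn, hmB, ?_, ?_, ?_⟩
    · calc ENNReal.ofReal (min (p / 2) r) ≤ ENNReal.ofReal ((P An).toReal) :=
          ENNReal.ofReal_le_ofReal (le_trans (min_le_left _ _) hcase')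
        _ = P An := ENNReal.ofReal_toReal (measure_ne_top _ _)
    · calc ENNReal.ofReal (min (p / 2) r) ≤ ENNReal.ofReal ((P B).toReal) :=
          ENNReal.ofReal_le_ofReal (le_trans (min_le_right _ _) hPB)
        _ = P B := ENNReal.ofReal_toReal (measure_ne_top _ _)
    · intro ω₁ hω₁ ω₂ hω₂
      simp only [hAn_def, Set.mem_setOf_eq] at hω₁
      simp only [hB_def, Set.mem_setOf_eq] at hω₂
      have hd' : X ω₁ - X ω₂ ≤ -s := by linarith
      rcases abs_cases (X ω₁ - X ω₂) with ⟨h, h'⟩ | ⟨h, h'⟩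
      · rw [hs_def] at hs hd' ⊢; linarith
      · rw [hs_def] at hs hd' ⊢; linarith
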